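/- Let $p$ be a prime, let $s \ge 1$ be an integer, and let $V_1, \ldots, V_s$ be real numbers with $p > V_i \ge 1$ for all $i$ and $V_1 \cdots V_s > p^{s-1}$. Then for any integers $b_1, \ldots, b_s$ there exists an integer $v$ with $\gcd(v, p) = 1$ such that $\langle b_i v \rangle_p \le V_i$ for each $i = 1, \ldots, s$. -/
import Mathlib

/-- Small values of linear functions modulo `p`: given reals `1 ≤ V_i < p` with
`V_1 ⋯ V_s > p^{s-1}` and integers `b_1, …, b_s`, there is an integer `v` coprime to `p`
such that the minimal absolute residue of `b_i v` modulo `p` is at most `V_i` for every `i`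
(expressed as: there exists `k ∈ ℤ` with `|b_i v - k p| ≤ V_i`). -/
theorem stmt_4 (p : ℕ) (hp : p.Prime) (s : ℕ) (hs : 1 ≤ s)
    (V : Fin s → ℝ) (hV1 : ∀ i, 1 ≤ V i) (hVp : ∀ i, V i < p)
    (hprod : (p : ℝ) ^ (s - 1) < ∏ i, V i)
    (b : Fin s → ℤ) :
    ∃ v : ℤ, Int.gcd v p = 1 ∧ ∀ i, ∃ k : ℤ, |((b i * v - k * p : ℤ) : ℝ)| ≤ V i := by
  have hVpos : ∀ i, (0:ℝ) < V i := fun i => lt_of_lt_of_le zero_lt_one (hV1 i)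
  have hPpos : (0:ℝ) < ∏ i, V i := Finset.prod_pos fun i _ => hVpos i
  have hppos : (0:ℝ) < p := by exact_mod_cast hp.pos
  set P : ℝ := ∏ i, V i with hPdef
  have hεpos : (0:ℝ) < P - (p:ℝ) ^ (s - 1) := sub_pos.mpr hprod
  have hs1 : (1:ℝ) ≤ (s:ℝ) := by exact_mod_cast hs
  have hppow : (0:ℝ) < (p:ℝ) ^ (s-1) := by positivity
  -- choose a large scaling factor N
  obtain ⟨N, hNgt⟩ : ∃ N : ℕ, (s:ℝ) * P / (P - (p:ℝ) ^ (s-1)) < N :=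
    ⟨⌊(s:ℝ) * P / (P - (p:ℝ) ^ (s-1))⌋₊ + 1, by push_cast; exact Nat.lt_floor_add_one _⟩
  have hquotpos : (0:ℝ) < (s:ℝ) * P / (P - (p:ℝ) ^ (s-1)) := by
    apply div_pos _ hεpos; nlinarith
  have hNpos : (0:ℝ) < (N:ℝ) := lt_trans hquotpos hNgt
  have hNpos' : 0 < N := by exact_mod_cast hNpos
  have hN1 : (1:ℝ) ≤ (N:ℝ) := by exact_mod_cast hNpos'
  have hsPN : (s:ℝ) * P < N * (P - (p:ℝ)^(s-1)) := by
    rw [div_lt_iff₀ hεpos] at hNgt; linarith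
  -- the scaled box sizes
  set M : Fin s → ℕ := fun i => ⌊(N:ℝ) * V i⌋₊ with hMdef
  have hMlb : ∀ i, ((N:ℝ) - 1) * V i < M i := by
    intro i
    have h1 : (N:ℝ) * V i - 1 < ⌊(N:ℝ) * V i⌋₊ := Nat.sub_one_lt_floor _
    have := hV1 i
    simp only [hMdef]
    nlinarith
  have hMub : ∀ i, (M i : ℝ) ≤ (N:ℝ) * V i := fun i => Nat.floor_le (mul_nonneg hNpos.le (hVpos i).le)
  have hMltNp : ∀ i, M i < N * p := by
    intro i
    have : (M i : ℝ) < (N:ℝ) * p := lt_of_le_of_lt (hMub i) (by nlinarith [hVp i])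
    exact_mod_cast this
  -- the key cardinality estimate
  have hkey : ((N:ℝ) * p) ^ s < (p:ℝ) * ∏ i, (M i : ℝ) := by
    have h1 : ∏ i, ((N:ℝ) - 1) * V i ≤ ∏ i, (M i : ℝ) := by
      apply Finset.prod_le_prod
      · intro i _; have := hV1 i; nlinarith
      · intro i _; exact (hMlb i).le
    have h2 : ∏ i, ((N:ℝ) - 1) * V i = ((N:ℝ) - 1) ^ s * P := by
      rw [Finset.prod_mul_distrib, Finset.prod_const, Finset.card_univ, Fintype.card_fin]
    have hps : (p:ℝ) ^ s = (p:ℝ) * (p:ℝ) ^ (s-1) := by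
      conv_lhs => rw [show s = (s-1)+1 from (Nat.succ_pred_eq_of_pos hs).symm]
      rw [pow_succ]; ring
    have hbern : 1 - (s:ℝ)/(N:ℝ) ≤ (1 - 1/(N:ℝ)) ^ s := by
      have h := one_add_mul_le_pow (a := -(1/(N:ℝ))) (by
        have h5 : (1:ℝ)/(N:ℝ) ≤ 1 := (div_le_one hNpos).mpr hN1
        linarith) s
      calc 1 - (s:ℝ)/(N:ℝ) = 1 + (s:ℕ) * (-(1/(N:ℝ))) := by push_cast; ring
        _ ≤ (1 + -(1/(N:ℝ))) ^ s := h
        _ = (1 - 1/(N:ℝ)) ^ s := by ring_nf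
    have hNm1 : ((N:ℝ)-1) ^ s = (N:ℝ)^s * (1 - 1/(N:ℝ))^s := by
      rw [← mul_pow]
      congr 1
      field_simp
    have step1 : (N:ℝ)^s * (1 - (s:ℝ)/(N:ℝ)) ≤ ((N:ℝ)-1)^s := by
      rw [hNm1]
      exact mul_le_mul_of_nonneg_left hbern (by positivity)
    have step2 : (p:ℝ) ^ (s-1) < (1 - (s:ℝ)/(N:ℝ)) * P := by
      have hd : (s:ℝ) * P / (N:ℝ) < P - (p:ℝ)^(s-1) := by
        rw [div_lt_iff₀ hNpos]; linarith
      have he : (1 - (s:ℝ)/(N:ℝ)) * P = P - (s:ℝ) * P / (N:ℝ) := by ring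
      linarith
    calc ((N:ℝ) * p) ^ s = ((p:ℝ) * (N:ℝ)^s) * (p:ℝ)^(s-1) := by
          rw [mul_pow, hps]; ring
      _ < ((p:ℝ) * (N:ℝ)^s) * ((1 - (s:ℝ)/(N:ℝ)) * P) := by
          apply mul_lt_mul_of_pos_left step2 (by positivity)
      _ = (p:ℝ) * ((N:ℝ)^s * (1 - (s:ℝ)/(N:ℝ))) * P := by ring
      _ ≤ (p:ℝ) * ((N:ℝ)-1)^s * P := by
          apply mul_le_mul_of_nonneg_right _ hPpos.le
          exact mul_le_mul_of_nonneg_left step1 hppos.le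
      _ = (p:ℝ) * (((N:ℝ)-1)^s * P) := by ring
      _ ≤ (p:ℝ) * ∏ i, (M i : ℝ) := by
          apply mul_le_mul_of_nonneg_left _ hppos.le
          rw [← h2]; exact h1
  -- pigeonhole
  haveI : NeZero (N * p) := ⟨Nat.mul_ne_zero hNpos'.ne' hp.pos.ne'⟩
  classical
  let f : ℕ × (Fin s → ℕ) → (Fin s → ZMod (N * p)) :=
    fun x i => (((N:ℤ) * b i * x.1 + x.2 i : ℤ) : ZMod (N * p))
  let A : Finset (ℕ × (Fin s → ℕ)) := Finset.range p ×ˢ Fintype.piFinset fun i => Finset.range (M i)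
  have hcard : (Finset.univ : Finset (Fin s → ZMod (N * p))).card < A.card := by
    have hAcard : A.card = p * ∏ i, M i := by
      simp [A, Fintype.card_piFinset]
    have hBcard : (Finset.univ : Finset (Fin s → ZMod (N * p))).card = (N * p) ^ s := by
      simp [Finset.card_univ, ZMod.card]
    rw [hAcard, hBcard]
    have : ((N * p : ℕ) : ℝ) ^ s < ((p * ∏ i, M i : ℕ) : ℝ) := by
      push_cast
      exact hkey
    exact_mod_cast this
  obtain ⟨x, hxA, y, hyA, hxy, hfeq⟩ :=
    Finset.exists_ne_map_eq_of_card_lt_of_maps_to hcard (fun a _ => Finset.mem_univ (f a))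
  simp only [A, Finset.mem_product, Finset.mem_range, Fintype.mem_piFinset] at hxA hyA
  obtain ⟨hx1, hx2⟩ := hxA
  obtain ⟨hy1, hy2⟩ := hyA
  have hdvd : ∀ i, ((N*p : ℕ):ℤ) ∣
      ((N:ℤ) * b i * x.1 + x.2 i) - ((N:ℤ) * b i * y.1 + y.2 i) := by
    intro i
    have h := congrFun hfeq i
    simp only [f] at h
    exact ((ZMod.intCast_eq_intCast_iff _ _ _).mp h).symm.dvd
  -- the two first coordinates differ
  have hne : x.1 ≠ y.1 := by
    intro h
    apply hxy
    have ht : x.2 = y.2 := by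
      funext i
      have hd := hdvd i
      rw [h] at hd
      have hd' : ((N*p:ℕ):ℤ) ∣ ((x.2 i : ℤ) - y.2 i) := by
        have he : ((N:ℤ) * b i * y.1 + x.2 i) - ((N:ℤ) * b i * y.1 + y.2 i)
            = (x.2 i : ℤ) - y.2 i := by ring
        rwa [he] at hd
      have hz : (x.2 i : ℤ) - y.2 i = 0 := by
        by_contra h0
        have hle := Int.le_of_dvd (abs_pos.mpr h0) ((dvd_abs _ _).mpr hd')
        have habs : |(x.2 i : ℤ) - y.2 i| < ((N*p:ℕ):ℤ) := by
          have h1 := hx2 i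
          have h2 := hy2 i
          have h3 := hMltNp i
          rw [abs_lt]
          constructor <;> push_cast <;> omega
        exact absurd habs (not_lt.mpr hle)
      have := sub_eq_zero.mp hz
      exact_mod_cast this
    exact Prod.ext h ht
  set w : ℤ := (x.1 : ℤ) - y.1 with hwdef
  have hw0 : w ≠ 0 := sub_ne_zero.mpr (by exact_mod_cast hne)
  refine ⟨w, ?_, ?_⟩
  · -- gcd
    have hwp : w.natAbs < p := by omega
    have hwa0 : 0 < w.natAbs := Int.natAbs_pos.mpr hw0
    have hnd : ¬ (p ∣ w.natAbs) := fun hdv => by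
      have := Nat.le_of_dvd hwa0 hdv
      omega
    have hc := (Nat.Prime.coprime_iff_not_dvd hp).mpr hnd
    have := hc.symm
    simpa [Int.gcd, Int.natAbs_natCast] using this
  · intro i
    have hd := hdvd i
    have hd2 : ((N*p:ℕ):ℤ) ∣ (N:ℤ) * (b i * w) + ((x.2 i : ℤ) - y.2 i) := by
      have he : ((N:ℤ) * b i * x.1 + x.2 i) - ((N:ℤ) * b i * y.1 + y.2 i)
          = (N:ℤ) * (b i * w) + ((x.2 i:ℤ) - y.2 i) := by rw [hwdef]; ring
      rwa [he] at hd
    have hNdvd : (N:ℤ) ∣ (x.2 i : ℤ) - y.2 i := by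
      have h1 : (N:ℤ) ∣ (N:ℤ) * (b i * w) + ((x.2 i:ℤ) - y.2 i) :=
        dvd_trans ⟨p, by push_cast; ring⟩ hd2
      exact (dvd_add_right ⟨b i * w, rfl⟩).mp h1
    obtain ⟨u, hu⟩ := hNdvd
    have hd3 : (N:ℤ) * (p:ℤ) ∣ (N:ℤ) * (b i * w + u) := by
      have he : (N:ℤ) * (b i * w + u) = (N:ℤ) * (b i * w) + ((x.2 i:ℤ) - y.2 i) := by
        rw [hu]; ring
      rw [he]
      exact_mod_cast hd2
    have hpdvd : (p:ℤ) ∣ b i * w + u := by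
      have hN0 : (N:ℤ) ≠ 0 := by exact_mod_cast hNpos'.ne'
      exact (mul_dvd_mul_iff_left hN0).mp hd3
    obtain ⟨m, hm⟩ := hpdvd
    refine ⟨m, ?_⟩
    have heq : b i * w - m * p = -u := by linarith [hm]
    rw [heq]
    have hub : (N:ℝ) * |(u:ℝ)| < (M i : ℝ) := by
      have habs : |(x.2 i:ℝ) - (y.2 i:ℝ)| < M i := by
        have h0x : (0:ℝ) ≤ (x.2 i:ℝ) := by positivity
        have h0y : (0:ℝ) ≤ (y.2 i:ℝ) := by positivity
        have h2 : ((y.2 i:ℕ):ℝ) < M i := by exact_mod_cast hy2 i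
        have h3 : ((x.2 i:ℕ):ℝ) < M i := by exact_mod_cast hx2 i
        rw [abs_lt]
        constructor <;> linarith
      have hu' : (x.2 i : ℝ) - y.2 i = N * u := by exact_mod_cast hu
      rw [hu', abs_mul, abs_of_pos hNpos] at habs
      exact habs
    have hfin : |(u:ℝ)| < V i := by
      have h4 := lt_of_lt_of_le hub (hMub i)
      exact lt_of_mul_lt_mul_left h4 hNpos.le
    push_cast
    rw [abs_neg]
    linarith
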